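/- There exists ε₀ > 0 such that for every ε with 0 < ε < ε₀ there exists γ ≥ 0 such that the pinned configuration space of (K_{3,3},l) with lengths a = ε, b = c = d = e = α = 1, f = β = √2 and l(v₂v₅) = γ — that is, the space of maps p : {v₁,…,v₆} → ℝ² with p(v₄)=(0,0), p(v₁)=(1,0), dist(p₁,p₆)=ε, dist(p₁,p₂)=1, dist(p₂,p₃)=1, dist(p₃,p₄)=1, dist(p₄,p₅)=1, dist(p₅,p₆)=√2, dist(p₁,p₄)=1, dist(p₃,p₆)=√2 and dist(p₂,p₅)=γ — has exactly six connected components. -/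

import Mathlib

/-- The pinned configuration space `C_{v₄,v₁}(K_{3,3}, l)`: realizations
`p : {v₁,…,v₆} → ℝ²` (vertex `vᵢ` is index `i-1`) of the weighted graph
`K_{3,3}` with edge lengths `a, b, c, d, e, f, α, β, γ` on the edges
`v₁v₆, v₁v₂, v₂v₃, v₃v₄, v₄v₅, v₅v₆, v₁v₄, v₃v₆, v₂v₅` respectively,
pinned by `p(v₄) = (0,0)` and `p(v₁) = (α,0)`. -/
def K33PinnedConfig (a b c d e f α β γ : ℝ) :
    Set (Fin 6 → EuclideanSpace ℝ (Fin 2)) :=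
  {p | p 3 = 0 ∧ p 0 = ![α, 0] ∧
    dist (p 0) (p 5) = a ∧ dist (p 0) (p 1) = b ∧ dist (p 1) (p 2) = c ∧
    dist (p 2) (p 3) = d ∧ dist (p 3) (p 4) = e ∧ dist (p 4) (p 5) = f ∧
    dist (p 0) (p 3) = α ∧ dist (p 2) (p 5) = β ∧ dist (p 1) (p 4) = γ}

set_option maxHeartbeats 1000000

namespace K33Six

noncomputable section

lemma abs_le_of_sq {x c : ℝ} (h : x^2 ≤ c^2) (hc : 0 ≤ c) : |x| ≤ c := by
  rw [← Real.sqrt_sq_eq_abs, ← Real.sqrt_sq hc]; exact Real.sqrt_le_sqrt h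

lemma big_abs {x : ℝ} (h : 15/16 ≤ x^2) : 24/25 ≤ x ∨ x ≤ -(24/25) := by
  rcases le_or_gt 0 x with h0|h0
  · left; nlinarith
  · right; nlinarith

lemma exists_angle {x y : ℝ} (h : x^2 + y^2 = 1) : ∃ t, Real.cos t = x ∧ Real.sin t = y := by
  have hx1 : -1 ≤ x := by nlinarith
  have hx2 : x ≤ 1 := by nlinarith
  have hyy : Real.sqrt (1 - x^2) = |y| := by
    rw [show 1 - x^2 = y^2 by linarith, Real.sqrt_sq_eq_abs]
  rcases le_or_gt 0 y with hy | hy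
  · exact ⟨Real.arccos x, Real.cos_arccos hx1 hx2,
      by rw [Real.sin_arccos, hyy, abs_of_nonneg hy]⟩
  · exact ⟨-Real.arccos x, by rw [Real.cos_neg]; exact Real.cos_arccos hx1 hx2,
      by rw [Real.sin_neg, Real.sin_arccos, hyy, abs_of_neg hy]; ring⟩

lemma chordBounds {ε u v a b : ℝ} (hε : 0 < ε) (hε1 : ε < 1/10)
    (h5 : (1-u)^2 + v^2 = ε^2) (hab : a^2 + b^2 = 1) (hch : (a-u)^2 + (b-v)^2 = 2) :
    a*u + b*v = u - 1 + ε^2/2 ∧ |u - 1| ≤ ε ∧ |v| ≤ ε ∧ |a| ≤ 1/4 ∧ 15/16 ≤ b^2 ∧ |b| ≤ 1 := by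
  have hline : a*u + b*v = u - 1 + ε^2/2 := by linear_combination (hab - hch + h5)/2
  have hu : |u - 1| ≤ ε := abs_le_of_sq (by nlinarith [sq_nonneg v]) hε.le
  have hv : |v| ≤ ε := abs_le_of_sq (by nlinarith [sq_nonneg (1-u)]) hε.le
  have hu1 : 9/10 ≤ u := by have := abs_le.1 hu; linarith [this.1]
  have hb1 : |b| ≤ 1 := abs_le_of_sq (by nlinarith [sq_nonneg a]) zero_le_one
  have hL : |u - 1 + ε^2/2| ≤ 21/200 := by
    have := abs_le.1 hu
    rw [abs_le]; constructor <;> nlinarith [this.1, this.2]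
  have hau : |a*u| ≤ 41/200 := by
    have : a*u = (u - 1 + ε^2/2) - b*v := by linarith
    rw [this]
    calc |(u - 1 + ε^2/2) - b*v| ≤ |u - 1 + ε^2/2| + |b*v| := abs_sub _ _
    _ ≤ 21/200 + |b| * |v| := by rw [abs_mul]; gcongr
    _ ≤ 41/200 := by nlinarith [abs_nonneg b, abs_nonneg v]
  have ha : |a| ≤ 1/4 := by
    have h1 : |a| * (9/10) ≤ |a| * |u| := by
      apply mul_le_mul_of_nonneg_left _ (abs_nonneg a)
      rw [abs_of_pos (by linarith)]; linarith
    rw [← abs_mul] at h1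
    nlinarith [abs_nonneg a]
  have hb : 15/16 ≤ b^2 := by nlinarith [sq_abs a, sq_nonneg a, abs_nonneg a]
  exact ⟨hline, hu, hv, ha, hb, hb1⟩

/-- dichotomy for p₁ : intersection of the two unit circles centered (1,0) and (a,b). -/
lemma p1cases {a b x y : ℝ} (hab : a^2 + b^2 = 1) (hb : 15/16 ≤ b^2)
    (hx1 : (1-x)^2 + y^2 = 1) (hx2 : (x-a)^2 + (y-b)^2 = 1) :
    (x = 0 ∧ y = 0) ∨ (x = 1 + a ∧ y = b) := by
  have hb0 : b ≠ 0 := by intro h; rw [h] at hb; norm_num at hb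
  have ha1 : (1:ℝ) - a ≠ 0 := by
    intro h
    have : a = 1 := by linarith
    rw [this] at hab; nlinarith
  have h1 : x^2 + y^2 = 2*x := by linear_combination hx1
  have h2 : x*(1-a) = b*y := by linear_combination (hx2 - hx1 - hab)/2
  rcases eq_or_ne x 0 with h0 | h0
  · left
    refine ⟨h0, ?_⟩
    have : b*y = 0 := by rw [← h2, h0]; ring
    rcases mul_eq_zero.1 this with h|h
    · exact absurd h hb0
    · exact h
  · right
    have key : x * ((2 - 2*a) * x - 2*b^2) = 0 := by
      linear_combination b^2*h1 + (x*(1-a) + b*y)*h2 - x^2*hab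
    rcases mul_eq_zero.1 key with h|h
    · exact absurd h h0
    have hx : x = 1 + a := by
      have h' : (2-2*a) * x = (2-2*a) * (1+a) := by linear_combination h + 2*hab
      exact mul_left_cancel₀ (by intro hh; apply ha1; linarith) h'
    refine ⟨hx, ?_⟩
    have h'' : b*y = b*b := by rw [← h2, hx]; linear_combination -hab
    exact mul_left_cancel₀ hb0 h''

/-- rigidity of p₄ given p₁ = (1+a,b). -/
lemma p4eq {u v a b a' b' : ℝ}
    (hab : a^2 + b^2 = 1) (hab' : a'^2 + b'^2 = 1)
    (hl : a*u + b*v = a'*u + b'*v)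
    (ha : |a| ≤ 1/4) (ha' : |a'| ≤ 1/4) (hb : 15/16 ≤ b^2) (hb' : 15/16 ≤ b'^2)
    (hu : 9/10 ≤ u) (hv : |v| ≤ 1/10)
    (h11 : (1 + a - a')^2 + (b - b')^2 = 1) :
    a' = a ∧ b' = b := by
  obtain ⟨ha1, ha2⟩ := abs_le.1 ha
  obtain ⟨ha1', ha2'⟩ := abs_le.1 ha'
  obtain ⟨hv1, hv2⟩ := abs_le.1 hv
  have h1 : 2*(a-a') + (a-a')^2 + (b-b')^2 = 0 := by linear_combination h11
  have h2 : (a-a')*u + (b-b')*v = 0 := by linear_combination hl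
  have h3 : (a+a')*(a-a') + (b+b')*(b-b') = 0 := by linear_combination hab - hab'
  have hbb := big_abs hb
  have hbb' := big_abs hb'
  rcases eq_or_ne (b - b') 0 with hE | hE
  · have hb'b : b' = b := by linarith [sub_eq_zero.1 hE]
    have hD : (a - a') * (2 + (a-a')) = 0 := by
      rw [hb'b] at h1; linear_combination h1
    rcases mul_eq_zero.1 hD with h|h
    · constructor
      · linarith [sub_eq_zero.1 h]
      · exact hb'b
    · exfalso; nlinarith
  · exfalso
    have key : (b - b') * ((a+a')*v - (b+b')*u) = 0 := by
      linear_combination (a+a')*h2 - u*h3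
    rcases mul_eq_zero.1 key with h|h
    · exact hE h
    · have hXle : (a+a')*v ≤ 1/20 := by
        nlinarith [mul_nonneg (show (0:ℝ) ≤ 1/2 - (a+a') by linarith) (show (0:ℝ) ≤ 1/10 + v by linarith),
          mul_nonneg (show (0:ℝ) ≤ 1/2 + (a+a') by linarith) (show (0:ℝ) ≤ 1/10 - v by linarith)]
      have hXge : -(1/20) ≤ (a+a')*v := by
        nlinarith [mul_nonneg (show (0:ℝ) ≤ 1/2 - (a+a') by linarith) (show (0:ℝ) ≤ 1/10 - v by linarith),
          mul_nonneg (show (0:ℝ) ≤ 1/2 + (a+a') by linarith) (show (0:ℝ) ≤ 1/10 + v by linarith)]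
      rcases hbb with hb1 | hb1 <;> rcases hbb' with hb1' | hb1'
      · have : (48:ℝ)/25 * (9/10) ≤ (b+b')*u := by
          nlinarith [mul_nonneg (show (0:ℝ) ≤ (b+b') - 48/25 by linarith) (show (0:ℝ) ≤ u - 9/10 by linarith)]
        linarith
      · nlinarith [sq_nonneg (a - a' + 1),
          mul_nonneg (show (0:ℝ) ≤ b - b' - 48/25 by linarith) (show (0:ℝ) ≤ b - b' + 48/25 by linarith)]
      · nlinarith [sq_nonneg (a - a' + 1),
          mul_nonneg (show (0:ℝ) ≤ b' - b - 48/25 by linarith) (show (0:ℝ) ≤ b' - b + 48/25 by linarith)]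
      · have : (b+b')*u ≤ -((48:ℝ)/25 * (9/10)) := by
          nlinarith [mul_nonneg (show (0:ℝ) ≤ -(b+b') - 48/25 by linarith) (show (0:ℝ) ≤ u - 9/10 by linarith)]
        linarith

/-- the chord-intersection quadratic: b is one of the two roots. -/
lemma rootsB {ε u v a b c r s : ℝ} (hε : 0 < ε) (hε1 : ε < 1/10)
    (h5 : (1-u)^2 + v^2 = ε^2) (hab : a^2 + b^2 = 1) (hch : (a-u)^2 + (b-v)^2 = 2)
    (hc : c = u - 1 + ε^2/2) (hr : r = u^2 + v^2) (hs : s = Real.sqrt (r - c^2)) :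
    (r*b = c*v + s*u ∨ r*b = c*v - s*u) ∧ a*u = c - b*v := by
  obtain ⟨hline, hu, hv, -, -, -⟩ := chordBounds hε hε1 h5 hab hch
  obtain ⟨hu1, hu2⟩ := abs_le.1 hu
  obtain ⟨hv1, hv2⟩ := abs_le.1 hv
  have haux : a*u = c - b*v := by linear_combination hline - hc
  subst hc; subst hr
  have he2 : ε^2 ≤ 1/100 := by nlinarith
  have he3 : (u-1)*ε^2 ≤ (1/10)*ε^2 := by nlinarith [sq_nonneg ε]
  have hrc : (39:ℝ)/50 ≤ (u^2+v^2) - (u - 1 + ε^2/2)^2 := by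
    nlinarith [sq_nonneg v, sq_nonneg ε, mul_pos hε hε, sq_nonneg (ε^2)]
  have hs2 : s^2 = (u^2+v^2) - (u - 1 + ε^2/2)^2 := by
    rw [hs, Real.sq_sqrt (by linarith)]
  have key : (u^2+v^2)*b^2 - 2*((u - 1 + ε^2/2)*v)*b + ((u - 1 + ε^2/2)^2 - u^2) = 0 := by
    linear_combination (-(a*u - b*v + (u - 1 + ε^2/2)))*hline + u^2*hab
  have factor : ((u^2+v^2)*b - ((u - 1 + ε^2/2)*v + s*u)) * ((u^2+v^2)*b - ((u - 1 + ε^2/2)*v - s*u)) = 0 := by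
    linear_combination (u^2+v^2)*key - u^2*hs2
  refine ⟨?_, haux⟩
  rcases mul_eq_zero.1 factor with h|h
  · left; linarith [sub_eq_zero.1 h]
  · right; linarith [sub_eq_zero.1 h]

lemma dist_sq_iff (x y : EuclideanSpace ℝ (Fin 2)) (r : ℝ) (hr : 0 ≤ r) :
    dist x y = r ↔ (x 0 - y 0)^2 + (x 1 - y 1)^2 = r^2 := by
  rw [EuclideanSpace.dist_eq, Fin.sum_univ_two]
  simp only [Real.dist_eq, sq_abs]
  constructor
  · intro h; rw [← h, Real.sq_sqrt (by positivity)]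
  · intro h; rw [h, Real.sqrt_sq hr]

lemma mem_iff {ε : ℝ} (hε : 0 < ε) (hε1 : ε < 1/10) (p : Fin 6 → EuclideanSpace ℝ (Fin 2)) :
    p ∈ K33PinnedConfig ε 1 1 1 1 (Real.sqrt 2) 1 (Real.sqrt 2) 1 ↔
      (p 3 = 0 ∧ p 0 = ![(1:ℝ), 0] ∧
       (1 - p 5 0)^2 + (p 5 1)^2 = ε^2 ∧
       (p 2 0)^2 + (p 2 1)^2 = 1 ∧
       (p 2 0 - p 5 0)^2 + (p 2 1 - p 5 1)^2 = 2 ∧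
       (p 4 0)^2 + (p 4 1)^2 = 1 ∧
       (p 4 0 - p 5 0)^2 + (p 4 1 - p 5 1)^2 = 2 ∧
       (p 1 = 0 ∨ (p 1 0 = 1 + p 2 0 ∧ p 1 1 = p 2 1 ∧ p 4 = p 2))) := by
  have h2 : ((Real.sqrt 2)^2 : ℝ) = 2 := Real.sq_sqrt (by norm_num)
  have h2n : (0:ℝ) ≤ Real.sqrt 2 := Real.sqrt_nonneg 2
  constructor
  · rintro ⟨h3, h0, dA, dB, dC, dD, dE, dF, -, dJ, dK⟩
    have c00 : p 0 0 = 1 := by rw [h0]; rfl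
    have c01 : p 0 1 = 0 := by rw [h0]; rfl
    have c30 : p 3 0 = 0 := by rw [h3]; rfl
    have c31 : p 3 1 = 0 := by rw [h3]; rfl
    have eA := (dist_sq_iff _ _ _ hε.le).1 dA
    have eB := (dist_sq_iff _ _ _ (by norm_num)).1 dB
    have eC := (dist_sq_iff _ _ _ (by norm_num)).1 dC
    have eD := (dist_sq_iff _ _ _ (by norm_num)).1 dD
    have eE := (dist_sq_iff _ _ _ (by norm_num)).1 dE
    have eF := (dist_sq_iff _ _ _ h2n).1 dF
    have eJ := (dist_sq_iff _ _ _ h2n).1 dJ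
    have eK := (dist_sq_iff _ _ _ (by norm_num)).1 dK
    rw [c00, c01] at eA eB
    rw [c30, c31] at eD eE
    rw [h2] at eF eJ
    have e5 : (1 - p 5 0)^2 + (p 5 1)^2 = ε^2 := by linear_combination eA
    have e2 : (p 2 0)^2 + (p 2 1)^2 = 1 := by linear_combination eD
    have e25 : (p 2 0 - p 5 0)^2 + (p 2 1 - p 5 1)^2 = 2 := by linear_combination eJ
    have e4 : (p 4 0)^2 + (p 4 1)^2 = 1 := by linear_combination eE
    have e45 : (p 4 0 - p 5 0)^2 + (p 4 1 - p 5 1)^2 = 2 := by linear_combination eF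
    refine ⟨h3, h0, e5, e2, e25, e4, e45, ?_⟩
    obtain ⟨hl2, hu2, hv2, ha2, hb2, -⟩ := chordBounds hε hε1 e5 e2 e25
    obtain ⟨hl4, -, -, ha4, hb4, -⟩ := chordBounds hε hε1 e5 e4 e45
    have hx1 : (1 - p 1 0)^2 + (p 1 1)^2 = 1 := by linear_combination eB
    have hx2 : (p 1 0 - p 2 0)^2 + (p 1 1 - p 2 1)^2 = 1 := by linear_combination eC
    rcases p1cases e2 hb2 hx1 hx2 with ⟨hx, hy⟩ | ⟨hx, hy⟩
    · left
      ext i; fin_cases i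
      · exact hx
      · exact hy
    · right
      refine ⟨hx, hy, ?_⟩
      have h11 : (1 + p 2 0 - p 4 0)^2 + (p 2 1 - p 4 1)^2 = 1 := by
        rw [hx, hy] at eK; linear_combination eK
      have hu9 : 9/10 ≤ p 5 0 := by
        have := abs_le.1 hu2; linarith [this.1]
      have hv10 : |p 5 1| ≤ 1/10 := le_trans hv2 (by linarith)
      obtain ⟨hA, hB⟩ := p4eq e2 e4 (by rw [hl2, hl4]) ha2 ha4 hb2 hb4 hu9 hv10 h11
      ext i; fin_cases i
      · exact hA
      · exact hB
  · rintro ⟨h3, h0, e5, e2, e25, e4, e45, hbr⟩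
    have c00 : p 0 0 = 1 := by rw [h0]; rfl
    have c01 : p 0 1 = 0 := by rw [h0]; rfl
    have c30 : p 3 0 = 0 := by rw [h3]; rfl
    have c31 : p 3 1 = 0 := by rw [h3]; rfl
    refine ⟨h3, h0, ?_, ?_, ?_, ?_, ?_, ?_, ?_, ?_, ?_⟩
    · rw [dist_sq_iff _ _ _ hε.le, c00, c01]; linear_combination e5
    · rcases hbr with h1 | ⟨hx, hy, -⟩
      · rw [dist_sq_iff _ _ _ (by norm_num : (0:ℝ) ≤ 1), c00, c01, h1]
        norm_num
      · rw [dist_sq_iff _ _ _ (by norm_num : (0:ℝ) ≤ 1), c00, c01, hx, hy]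
        linear_combination e2
    · rcases hbr with h1 | ⟨hx, hy, -⟩
      · rw [dist_sq_iff _ _ _ (by norm_num : (0:ℝ) ≤ 1), h1]
        show ((0:ℝ) - p 2 0)^2 + ((0:ℝ) - p 2 1)^2 = 1^2
        linear_combination e2
      · rw [dist_sq_iff _ _ _ (by norm_num : (0:ℝ) ≤ 1), hx, hy]
        ring_nf
    · rw [dist_sq_iff _ _ _ (by norm_num : (0:ℝ) ≤ 1), c30, c31]; linear_combination e2
    · rw [dist_sq_iff _ _ _ (by norm_num : (0:ℝ) ≤ 1), c30, c31]; linear_combination e4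
    · rw [dist_sq_iff _ _ _ h2n, h2]; linear_combination e45
    · rw [dist_sq_iff _ _ _ (by norm_num : (0:ℝ) ≤ 1), c00, c01, c30, c31]; norm_num
    · rw [dist_sq_iff _ _ _ h2n, h2]; linear_combination e25
    · rcases hbr with h1 | ⟨hx, hy, h42⟩
      · rw [dist_sq_iff _ _ _ (by norm_num : (0:ℝ) ≤ 1), h1]
        show ((0:ℝ) - p 4 0)^2 + ((0:ℝ) - p 4 1)^2 = 1^2
        linear_combination e4
      · rw [dist_sq_iff _ _ _ (by norm_num : (0:ℝ) ≤ 1), hx, hy, h42]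
        ring_nf

def uu (ε t : ℝ) : ℝ := 1 + ε * Real.cos t
def vv (ε t : ℝ) : ℝ := ε * Real.sin t
def cc (ε t : ℝ) : ℝ := ε * Real.cos t + ε^2/2
def rr (ε t : ℝ) : ℝ := (uu ε t)^2 + (vv ε t)^2
def ss (ε t : ℝ) : ℝ := Real.sqrt (rr ε t - (cc ε t)^2)
def AA (ε σ t : ℝ) : ℝ := (cc ε t * uu ε t - σ * ss ε t * vv ε t) / rr ε t
def BB (ε σ t : ℝ) : ℝ := (cc ε t * vv ε t + σ * ss ε t * uu ε t) / rr ε t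

def Phi (ε : ℝ) (k : Bool) (σ2 σ4 : ℝ) (t : ℝ) : Fin 6 → EuclideanSpace ℝ (Fin 2) :=
  ![!₂[1, 0],
    if k then 0 else !₂[1 + AA ε σ2 t, BB ε σ2 t],
    !₂[AA ε σ2 t, BB ε σ2 t],
    0,
    !₂[AA ε σ4 t, BB ε σ4 t],
    !₂[uu ε t, vv ε t]]

lemma h5Phi (ε t : ℝ) : (1 - uu ε t)^2 + (vv ε t)^2 = ε^2 := by
  unfold uu vv
  linear_combination ε^2 * (Real.sin_sq_add_cos_sq t)

lemma ccPhi (ε t : ℝ) : cc ε t = uu ε t - 1 + ε^2/2 := by unfold cc uu; ring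

/-- scalar facts about the two chord branches -/
lemma branchScalar {ε u v c r s σ : ℝ} (hε : 0 < ε) (hε1 : ε < 1/10)
    (h5 : (1-u)^2 + v^2 = ε^2) (hc : c = u - 1 + ε^2/2) (hr : r = u^2 + v^2)
    (hs : s = Real.sqrt (r - c^2)) (hσ : σ = 1 ∨ σ = -1) :
    ((c*u - σ*s*v)/r)^2 + ((c*v + σ*s*u)/r)^2 = 1 ∧
    ((c*u - σ*s*v)/r - u)^2 + ((c*v + σ*s*u)/r - v)^2 = 2 ∧
    1/2 ≤ σ * ((c*v + σ*s*u)/r) := by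
  subst hc; subst hr
  have hu : |u - 1| ≤ ε := abs_le_of_sq (by nlinarith [sq_nonneg v]) hε.le
  have hv : |v| ≤ ε := abs_le_of_sq (by nlinarith [sq_nonneg (1-u)]) hε.le
  obtain ⟨hu1, hu2⟩ := abs_le.1 hu
  obtain ⟨hv1, hv2⟩ := abs_le.1 hv
  have hu9 : 9/10 ≤ u := by linarith
  have he2 : ε^2 ≤ 1/100 := by nlinarith
  have he3 : (u-1)*ε^2 ≤ (1/10)*ε^2 := by nlinarith [sq_nonneg ε]
  have hrc : (39:ℝ)/50 ≤ (u^2+v^2) - (u - 1 + ε^2/2)^2 := by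
    nlinarith [sq_nonneg v, sq_nonneg ε, mul_pos hε hε, sq_nonneg (ε^2)]
  have hrlow : (4:ℝ)/5 ≤ u^2+v^2 := by nlinarith [sq_nonneg v]
  have hrhigh : u^2+v^2 ≤ (121:ℝ)/100 := by nlinarith
  have hr0 : (u^2+v^2) ≠ 0 := by positivity
  have hrpos : (0:ℝ) < u^2+v^2 := by nlinarith
  have hs2 : s^2 = (u^2+v^2) - (u - 1 + ε^2/2)^2 := by
    rw [hs, Real.sq_sqrt (by linarith)]
  have hs0 : 0 ≤ s := by rw [hs]; exact Real.sqrt_nonneg _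
  have hs1 : (22:ℝ)/25 ≤ s := by nlinarith
  have hR1 : (u^2+v^2) - 2*(u - 1 + ε^2/2) = 1 := by linear_combination h5
  have hcle : |u - 1 + ε^2/2| ≤ 21/200 := by
    rw [abs_le]; constructor <;> nlinarith
  obtain ⟨hcl1, hcl2⟩ := abs_le.1 hcle
  have key1 : (( (u - 1 + ε^2/2)*u - σ*s*v)^2 + ((u - 1 + ε^2/2)*v + σ*s*u)^2) = (u^2+v^2)^2 := by
    rcases hσ with h | h <;> subst h <;> linear_combination (u^2+v^2)*hs2
  have key2 : (((u - 1 + ε^2/2)*u - σ*s*v) - u*(u^2+v^2))^2 + (((u - 1 + ε^2/2)*v + σ*s*u) - v*(u^2+v^2))^2 = 2*(u^2+v^2)^2 := by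
    rcases hσ with h | h <;> subst h <;> linear_combination (u^2+v^2)*hs2 + (u^2+v^2)^2*hR1
  refine ⟨?_, ?_, ?_⟩
  · rw [div_pow, div_pow, ← add_div, key1, div_self (pow_ne_zero 2 hr0)]
  · have e1 : ((u - 1 + ε^2/2)*u - σ*s*v)/(u^2+v^2) - u = (((u - 1 + ε^2/2)*u - σ*s*v) - u*(u^2+v^2))/(u^2+v^2) := by
      field_simp
    have e2 : ((u - 1 + ε^2/2)*v + σ*s*u)/(u^2+v^2) - v = (((u - 1 + ε^2/2)*v + σ*s*u) - v*(u^2+v^2))/(u^2+v^2) := by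
      field_simp
    rw [e1, e2, div_pow, div_pow, ← add_div, key2, mul_div_assoc, div_self (pow_ne_zero 2 hr0), mul_one]
  · rcases hσ with h | h <;> subst h
    · rw [one_mul, le_div_iff₀ hrpos]
      nlinarith [mul_nonneg (show (0:ℝ) ≤ s - 22/25 by linarith) (show (0:ℝ) ≤ u - 9/10 by linarith),
        mul_nonneg (show (0:ℝ) ≤ 21/200 - (u - 1 + ε^2/2) by linarith) (show (0:ℝ) ≤ 1/10 - v by linarith),
        mul_nonneg (show (0:ℝ) ≤ 21/200 + (u - 1 + ε^2/2) by linarith) (show (0:ℝ) ≤ 1/10 + v by linarith)]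
    · rw [show (-1 : ℝ) * (((u - 1 + ε^2/2)*v + -1*s*u)/(u^2+v^2)) = (s*u - (u - 1 + ε^2/2)*v)/(u^2+v^2) by ring,
        le_div_iff₀ hrpos]
      nlinarith [mul_nonneg (show (0:ℝ) ≤ s - 22/25 by linarith) (show (0:ℝ) ≤ u - 9/10 by linarith),
        mul_nonneg (show (0:ℝ) ≤ 21/200 - (u - 1 + ε^2/2) by linarith) (show (0:ℝ) ≤ 1/10 + v by linarith),
        mul_nonneg (show (0:ℝ) ≤ 21/200 + (u - 1 + ε^2/2) by linarith) (show (0:ℝ) ≤ 1/10 - v by linarith)]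




/-- branch facts expressed via AA/BB. -/
lemma branchAB {ε : ℝ} (hε : 0 < ε) (hε1 : ε < 1/10) (σ t : ℝ) (hσ : σ = 1 ∨ σ = -1) :
    (AA ε σ t)^2 + (BB ε σ t)^2 = 1 ∧
    (AA ε σ t - uu ε t)^2 + (BB ε σ t - vv ε t)^2 = 2 ∧
    1/2 ≤ σ * BB ε σ t :=
  branchScalar hε hε1 (h5Phi ε t) (ccPhi ε t) rfl rfl hσ

lemma memPhi {ε : ℝ} (hε : 0 < ε) (hε1 : ε < 1/10) (k : Bool) (σ2 σ4 : ℝ)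
    (hσ2 : σ2 = 1 ∨ σ2 = -1) (hσ4 : σ4 = 1 ∨ σ4 = -1) (hk : k = false → σ4 = σ2) (t : ℝ) :
    Phi ε k σ2 σ4 t ∈ K33PinnedConfig ε 1 1 1 1 (Real.sqrt 2) 1 (Real.sqrt 2) 1 := by
  obtain ⟨hAB2, hch2, hsgn2⟩ := branchAB hε hε1 σ2 t hσ2
  obtain ⟨hAB4, hch4, hsgn4⟩ := branchAB hε hε1 σ4 t hσ4
  rw [mem_iff hε hε1]
  refine ⟨rfl, rfl, h5Phi ε t, hAB2, hch2, hAB4, hch4, ?_⟩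
  cases k
  · right
    have hσ := hk rfl
    subst hσ
    exact ⟨rfl, rfl, rfl⟩
  · exact Or.inl rfl

lemma rrPos {ε : ℝ} (hε : 0 < ε) (hε1 : ε < 1/10) (t : ℝ) : 0 < rr ε t := by
  unfold rr uu vv
  nlinarith [Real.sin_sq_add_cos_sq t, mul_le_mul_of_nonneg_left (Real.neg_one_le_cos t) hε.le,
    sq_nonneg (1 - ε), sq_nonneg (Real.sin t), sq_nonneg ε]

lemma contPhi {ε : ℝ} (hε : 0 < ε) (hε1 : ε < 1/10) (k : Bool) (σ2 σ4 : ℝ) :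
    Continuous (fun t => Phi ε k σ2 σ4 t) := by
  have hrr : ∀ t, rr ε t ≠ 0 := fun t => (rrPos hε hε1 t).ne'
  have cu : Continuous (uu ε) := by
    unfold uu; exact continuous_const.add (continuous_const.mul Real.continuous_cos)
  have cv : Continuous (vv ε) := by
    unfold vv; exact continuous_const.mul Real.continuous_sin
  have ccc : Continuous (cc ε) := by
    unfold cc; exact (continuous_const.mul Real.continuous_cos).add continuous_const
  have crr : Continuous (rr ε) := by
    unfold rr; exact (cu.pow 2).add (cv.pow 2)
  have css : Continuous (ss ε) := by
    unfold ss; exact Real.continuous_sqrt.comp (crr.sub (ccc.pow 2))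
  have cAA : ∀ σ, Continuous (AA ε σ) := fun σ => by
    unfold AA; exact ((ccc.mul cu).sub ((continuous_const.mul css).mul cv)).div crr hrr
  have cBB : ∀ σ, Continuous (BB ε σ) := fun σ => by
    unfold BB; exact ((ccc.mul cv).add ((continuous_const.mul css).mul cu)).div crr hrr
  apply continuous_pi
  intro i
  fin_cases i
  · exact continuous_const
  · cases k
    · show Continuous fun t => (!₂[1 + AA ε σ2 t, BB ε σ2 t] : EuclideanSpace ℝ (Fin 2))
      apply (PiLp.continuous_toLp 2 _).comp
      apply continuous_pi
      intro j; fin_cases j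
      · simp; exact continuous_const.add (cAA σ2)
      · simpa using cBB σ2
    · exact continuous_const
  · show Continuous fun t => (!₂[AA ε σ2 t, BB ε σ2 t] : EuclideanSpace ℝ (Fin 2))
    apply (PiLp.continuous_toLp 2 _).comp
    apply continuous_pi
    intro j; fin_cases j
    · simpa using cAA σ2
    · simpa using cBB σ2
  · exact continuous_const
  · show Continuous fun t => (!₂[AA ε σ4 t, BB ε σ4 t] : EuclideanSpace ℝ (Fin 2))
    apply (PiLp.continuous_toLp 2 _).comp
    apply continuous_pi
    intro j; fin_cases j
    · simpa using cAA σ4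
    · simpa using cBB σ4
  · show Continuous fun t => (!₂[uu ε t, vv ε t] : EuclideanSpace ℝ (Fin 2))
    apply (PiLp.continuous_toLp 2 _).comp
    apply continuous_pi
    intro j; fin_cases j
    · simpa using cu
    · simpa using cv

lemma Sprops {ε : ℝ} (hε : 0 < ε) (hε1 : ε < 1/10) {p : Fin 6 → EuclideanSpace ℝ (Fin 2)}
    (hp : p ∈ K33PinnedConfig ε 1 1 1 1 (Real.sqrt 2) 1 (Real.sqrt 2) 1) :
    (p 1 0 = 0 ∨ 3/4 ≤ p 1 0) ∧ 15/16 ≤ (p 2 1)^2 ∧ 15/16 ≤ (p 4 1)^2 := by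
  obtain ⟨h3, h0, e5, e2, e25, e4, e45, hbr⟩ := (mem_iff hε hε1 p).1 hp
  obtain ⟨-, -, -, ha2, hb2, -⟩ := chordBounds hε hε1 e5 e2 e25
  obtain ⟨-, -, -, -, hb4, -⟩ := chordBounds hε hε1 e5 e4 e45
  refine ⟨?_, hb2, hb4⟩
  rcases hbr with h | ⟨hx, -, -⟩
  · left; rw [h]; rfl
  · right; rw [hx]; have := abs_le.1 ha2; linarith [this.1]

lemma matchPhi {ε : ℝ} (hε : 0 < ε) (hε1 : ε < 1/10) {p : Fin 6 → EuclideanSpace ℝ (Fin 2)}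
    (h3 : p 3 = 0) (h0 : p 0 = ![(1:ℝ), 0])
    (e5 : (1 - p 5 0)^2 + (p 5 1)^2 = ε^2)
    (e2 : (p 2 0)^2 + (p 2 1)^2 = 1)
    (e25 : (p 2 0 - p 5 0)^2 + (p 2 1 - p 5 1)^2 = 2)
    (e4 : (p 4 0)^2 + (p 4 1)^2 = 1)
    (e45 : (p 4 0 - p 5 0)^2 + (p 4 1 - p 5 1)^2 = 2)
    (k : Bool) (σ2 σ4 : ℝ) (hσ2 : σ2 = 1 ∨ σ2 = -1) (hσ4 : σ4 = 1 ∨ σ4 = -1)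
    (hs2 : 0 < σ2 * p 2 1) (hs4 : 0 < σ4 * p 4 1)
    (hbr : (k = true ∧ p 1 = 0) ∨ (k = false ∧ p 1 0 = 1 + p 2 0 ∧ p 1 1 = p 2 1)) :
    ∃ t, p = Phi ε k σ2 σ4 t := by
  have hε0 : ε ≠ 0 := hε.ne'
  have hu9 : 9/10 ≤ p 5 0 := by
    have hu : |p 5 0 - 1| ≤ ε := abs_le_of_sq (by nlinarith [sq_nonneg (p 5 1)]) hε.le
    have := abs_le.1 hu; linarith [this.1]
  have hu0 : p 5 0 ≠ 0 := by linarith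
  have hx : ((p 5 0 - 1)/ε)^2 + (p 5 1/ε)^2 = 1 := by
    field_simp
    linear_combination e5
  obtain ⟨t, hct, hst⟩ := exists_angle hx
  have huu : uu ε t = p 5 0 := by unfold uu; rw [hct]; field_simp; ring
  have hvv : vv ε t = p 5 1 := by unfold vv; rw [hst]; field_simp
  have hcc : cc ε t = p 5 0 - 1 + ε^2/2 := by unfold cc; rw [hct]; field_simp
  have hrr : rr ε t = (p 5 0)^2 + (p 5 1)^2 := by unfold rr; rw [huu, hvv]
  have hrp : 0 < rr ε t := rrPos hε hε1 t
  -- branch facts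
  have br1 := branchAB hε hε1 1 t (Or.inl rfl)
  have brm := branchAB hε hε1 (-1) t (Or.inr rfl)
  -- p 2 matches
  have main : ∀ (σ : ℝ), (σ = 1 ∨ σ = -1) → ∀ j : Fin 6, (p j 0)^2 + (p j 1)^2 = 1 →
      (p j 0 - p 5 0)^2 + (p j 1 - p 5 1)^2 = 2 → 0 < σ * p j 1 →
      p j 0 = AA ε σ t ∧ p j 1 = BB ε σ t := by
    intro σ hσ j ej ej5 hsj
    obtain ⟨hroots, hau⟩ := rootsB hε hε1 e5 ej ej5 hcc hrr rfl
    have hBBr : ∀ τ : ℝ, BB ε τ t * rr ε t = cc ε t * p 5 1 + τ * (ss ε t * p 5 0) := by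
      intro τ
      unfold BB
      rw [huu, hvv, div_mul_cancel₀ _ hrp.ne']
      ring
    have hbP : (rr ε t * p j 1 = cc ε t * p 5 1 + ss ε t * p 5 0) → p j 1 = BB ε 1 t := by
      intro h
      refine mul_right_cancel₀ hrp.ne' ?_
      rw [hBBr 1]
      linear_combination h
    have hbM : (rr ε t * p j 1 = cc ε t * p 5 1 - ss ε t * p 5 0) → p j 1 = BB ε (-1) t := by
      intro h
      refine mul_right_cancel₀ hrp.ne' ?_
      rw [hBBr (-1)]
      linear_combination h
    have hb : p j 1 = BB ε σ t := by
      rcases hσ with h | h <;> subst h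
      · rcases hroots with h | h
        · exact hbP h
        · exfalso
          have h1 := hbM h
          have hs := brm.2.2
          rw [← h1] at hs
          rw [one_mul] at hsj
          linarith
      · rcases hroots with h | h
        · exfalso
          have h1 := hbP h
          have hs := br1.2.2
          rw [← h1] at hs
          rw [one_mul] at hs
          have : -1 * p j 1 > 0 := hsj
          linarith
        · exact hbM h
    refine ⟨?_, hb⟩
    have hbr2 : rr ε t * p j 1 = cc ε t * p 5 1 + σ * (ss ε t * p 5 0) := by
      rw [hb]
      have := hBBr σ
      linarith [this]
    have gu : (p j 0 * rr ε t) * p 5 0 = (cc ε t * uu ε t - σ * ss ε t * vv ε t) * p 5 0 := by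
      rw [huu, hvv]
      linear_combination (rr ε t)*hau - (p 5 1)*hbr2 + (cc ε t)*hrr
    have : p j 0 * rr ε t = cc ε t * uu ε t - σ * ss ε t * vv ε t := mul_right_cancel₀ hu0 gu
    unfold AA
    rw [eq_div_iff hrp.ne']
    exact this
  have m2 := main σ2 hσ2 2 e2 e25 hs2
  have m4 := main σ4 hσ4 4 e4 e45 hs4
  refine ⟨t, ?_⟩
  funext i
  fin_cases i
  · exact WithLp.ofLp_injective (p := 2) h0
  · rcases hbr with ⟨hk, h1⟩ | ⟨hk, hx1, hy1⟩ <;> subst hk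
    · exact h1
    · show p 1 = !₂[1 + AA ε σ2 t, BB ε σ2 t]
      ext j; fin_cases j
      · show p 1 0 = 1 + AA ε σ2 t
        rw [hx1, m2.1]
      · show p 1 1 = BB ε σ2 t
        rw [hy1, m2.2]
  · show p 2 = !₂[AA ε σ2 t, BB ε σ2 t]
    ext j; fin_cases j
    · exact m2.1
    · exact m2.2
  · exact h3
  · show p 4 = !₂[AA ε σ4 t, BB ε σ4 t]
    ext j; fin_cases j
    · exact m4.1
    · exact m4.2
  · show p 5 = !₂[uu ε t, vv ε t]
    ext j; fin_cases j
    · exact huu.symm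
    · exact hvv.symm

end
end K33Six

namespace K33Six
noncomputable section

def dataK (i : Fin 6) : Bool := decide (i.val < 4)
def dataS2 (i : Fin 6) : ℝ := if i.val = 2 ∨ i.val = 3 ∨ i.val = 5 then -1 else 1
def dataS4 (i : Fin 6) : ℝ := if i.val = 1 ∨ i.val = 3 ∨ i.val = 5 then -1 else 1

lemma hdS2 (i : Fin 6) : dataS2 i = 1 ∨ dataS2 i = -1 := by
  unfold dataS2; split
  · exact Or.inr rfl
  · exact Or.inl rfl

lemma hdS4 (i : Fin 6) : dataS4 i = 1 ∨ dataS4 i = -1 := by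
  unfold dataS4; split
  · exact Or.inr rfl
  · exact Or.inl rfl

lemma hdk (i : Fin 6) : dataK i = false → dataS4 i = dataS2 i := by
  fin_cases i <;> norm_num [dataK, dataS2, dataS4]

end
end K33Six

open K33Six in
/-- **Example: six connected components.** For all sufficiently small `ε > 0`
there is a choice of `γ ≥ 0` such that the pinned configuration space of
`(K_{3,3}, l)` with lengths `a = ε`, `b = c = d = e = α = 1`, `f = β = √2`,
`l(v₂v₅) = γ` has exactly six connected components. -/
theorem K33_pinned_six_components :
    ∃ ε₀ > (0 : ℝ), ∀ ε : ℝ, 0 < ε → ε < ε₀ → ∃ γ : ℝ, 0 ≤ γ ∧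
      Nat.card (ConnectedComponents (K33PinnedConfig ε 1 1 1 1
        (Real.sqrt 2) 1 (Real.sqrt 2) γ)) = 6 := by
  refine ⟨1/10, by norm_num, ?_⟩
  intro ε hε hε1
  refine ⟨1, zero_le_one, ?_⟩
  set S : Set (Fin 6 → EuclideanSpace ℝ (Fin 2)) :=
    K33PinnedConfig ε 1 1 1 1 (Real.sqrt 2) 1 (Real.sqrt 2) 1 with hSdef
  have hmem : ∀ (i : Fin 6) (t : ℝ), Phi ε (dataK i) (dataS2 i) (dataS4 i) t ∈ S := by
    intro i t
    rw [hSdef]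
    exact memPhi hε hε1 _ _ _ (hdS2 i) (hdS4 i) (hdk i) t
  let f : Fin 6 → ℝ → ↥S := fun i t => ⟨Phi ε (dataK i) (dataS2 i) (dataS4 i) t, hmem i t⟩
  have contf : ∀ i, Continuous (f i) :=
    fun i => Continuous.subtype_mk (contPhi hε hε1 _ _ _) _
  have conn : ∀ i, IsPreconnected (Set.range (f i)) :=
    fun i => (isConnected_range (contf i)).isPreconnected
  have samecomp : ∀ i t, (ConnectedComponents.mk (f i t)) = ConnectedComponents.mk (f i 0) :=
    fun i t => ConnectedComponents.coe_eq_coe'.2 ((conn i).subset_connectedComponent ⟨0, rfl⟩ ⟨t, rfl⟩)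
  have transfer : ∀ {x y : ↥S} {U : Set ↥S}, IsClopen U →
      (ConnectedComponents.mk x) = ConnectedComponents.mk y → x ∈ U → y ∈ U := by
    intro x y U hU hxy hx
    exact hU.connectedComponent_subset hx (ConnectedComponents.coe_eq_coe'.1 hxy.symm)
  have sp : ∀ x : ↥S, ((x : Fin 6 → EuclideanSpace ℝ (Fin 2)) 1 0 = 0 ∨
      3/4 ≤ (x : Fin 6 → EuclideanSpace ℝ (Fin 2)) 1 0) ∧
      15/16 ≤ ((x : Fin 6 → EuclideanSpace ℝ (Fin 2)) 2 1)^2 ∧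
      15/16 ≤ ((x : Fin 6 → EuclideanSpace ℝ (Fin 2)) 4 1)^2 := by
    intro x
    exact Sprops hε hε1 x.2
  have capply : ∀ i : Fin 6, Continuous (fun p : Fin 6 → EuclideanSpace ℝ (Fin 2) => p i) :=
    fun i => continuous_apply i
  have c10 : Continuous (fun x : ↥S => (x : Fin 6 → EuclideanSpace ℝ (Fin 2)) 1 0) := by
    exact ((EuclideanSpace.proj (0 : Fin 2)).continuous.comp (capply 1)).comp continuous_subtype_val
  have c21 : Continuous (fun x : ↥S => (x : Fin 6 → EuclideanSpace ℝ (Fin 2)) 2 1) := by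
    exact ((EuclideanSpace.proj (1 : Fin 2)).continuous.comp (capply 2)).comp continuous_subtype_val
  have c41 : Continuous (fun x : ↥S => (x : Fin 6 → EuclideanSpace ℝ (Fin 2)) 4 1) := by
    exact ((EuclideanSpace.proj (1 : Fin 2)).continuous.comp (capply 4)).comp continuous_subtype_val
  have hU1 : IsClopen {x : ↥S | (x : Fin 6 → EuclideanSpace ℝ (Fin 2)) 1 0 < 1/2} := by
    constructor
    · have he : {x : ↥S | (x : Fin 6 → EuclideanSpace ℝ (Fin 2)) 1 0 < 1/2} =
          {x : ↥S | (x : Fin 6 → EuclideanSpace ℝ (Fin 2)) 1 0 ≤ 0} := by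
        ext x
        simp only [Set.mem_setOf_eq]
        constructor
        · intro h
          rcases (sp x).1 with h0 | h0
          · rw [h0]
          · linarith
        · intro h; linarith
      rw [he]
      exact isClosed_le c10 continuous_const
    · exact isOpen_lt c10 continuous_const
  have hU2 : IsClopen {x : ↥S | 0 < (x : Fin 6 → EuclideanSpace ℝ (Fin 2)) 2 1} := by
    constructor
    · have he : {x : ↥S | 0 < (x : Fin 6 → EuclideanSpace ℝ (Fin 2)) 2 1} =
          {x : ↥S | 1/2 ≤ (x : Fin 6 → EuclideanSpace ℝ (Fin 2)) 2 1} := by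
        ext x
        simp only [Set.mem_setOf_eq]
        constructor
        · intro h
          rcases big_abs (sp x).2.1 with h0 | h0 <;> linarith
        · intro h; linarith
      rw [he]
      exact isClosed_le continuous_const c21
    · exact isOpen_lt continuous_const c21
  have hU3 : IsClopen {x : ↥S | 0 < (x : Fin 6 → EuclideanSpace ℝ (Fin 2)) 4 1} := by
    constructor
    · have he : {x : ↥S | 0 < (x : Fin 6 → EuclideanSpace ℝ (Fin 2)) 4 1} =
          {x : ↥S | 1/2 ≤ (x : Fin 6 → EuclideanSpace ℝ (Fin 2)) 4 1} := by
        ext x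
        simp only [Set.mem_setOf_eq]
        constructor
        · intro h
          rcases big_abs (sp x).2.2 with h0 | h0 <;> linarith
        · intro h; linarith
      rw [he]
      exact isClosed_le continuous_const c41
    · exact isOpen_lt continuous_const c41
  -- numeric facts about basepoints
  have hBp : 1/2 ≤ BB ε 1 0 := by
    have := (branchAB hε hε1 1 0 (Or.inl rfl)).2.2
    linarith [this]
  have hBm : BB ε (-1) 0 ≤ -(1/2) := by
    have := (branchAB hε hε1 (-1) 0 (Or.inr rfl)).2.2
    linarith [this]
  have hAb : ∀ σ : ℝ, (σ = 1 ∨ σ = -1) → -(1/4) ≤ AA ε σ 0 := by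
    intro σ hσ
    obtain ⟨h1', h2', -⟩ := branchAB hε hε1 σ 0 hσ
    have := (chordBounds hε hε1 (h5Phi ε 0) h1' h2').2.2.2.1
    have := abs_le.1 this
    linarith [this.1]
  let F : Fin 6 → ConnectedComponents ↥S := fun i => ConnectedComponents.mk (f i 0)
  -- basepoint signature facts
  have vals1 : ∀ i : Fin 6, (((f i 0 : ↥S) : Fin 6 → EuclideanSpace ℝ (Fin 2)) 1 0 < 1/2)
      ↔ dataK i = true := by
    intro i
    fin_cases i
    · show ((0:ℝ) < 1/2) ↔ (true = true); simp
    · show ((0:ℝ) < 1/2) ↔ (true = true); simp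
    · show ((0:ℝ) < 1/2) ↔ (true = true); simp
    · show ((0:ℝ) < 1/2) ↔ (true = true); simp
    · show ((1 + AA ε 1 0 : ℝ) < 1/2) ↔ (false = true)
      have := hAb 1 (Or.inl rfl)
      constructor
      · intro h; linarith
      · intro h; simp at h
    · show ((1 + AA ε (-1) 0 : ℝ) < 1/2) ↔ (false = true)
      have := hAb (-1) (Or.inr rfl)
      constructor
      · intro h; linarith
      · intro h; simp at h
  have vals2 : ∀ i : Fin 6, (0 < ((f i 0 : ↥S) : Fin 6 → EuclideanSpace ℝ (Fin 2)) 2 1)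
      ↔ dataS2 i = 1 := by
    intro i
    fin_cases i
    · show (0 < BB ε 1 0) ↔ ((1:ℝ) = 1); constructor <;> intro h; rfl; linarith
    · show (0 < BB ε 1 0) ↔ ((1:ℝ) = 1); constructor <;> intro h; rfl; linarith
    · show (0 < BB ε (-1) 0) ↔ ((-1:ℝ) = 1)
      constructor
      · intro h; linarith
      · intro h; norm_num at h
    · show (0 < BB ε (-1) 0) ↔ ((-1:ℝ) = 1)
      constructor
      · intro h; linarith
      · intro h; norm_num at h
    · show (0 < BB ε 1 0) ↔ ((1:ℝ) = 1); constructor <;> intro h; rfl; linarith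
    · show (0 < BB ε (-1) 0) ↔ ((-1:ℝ) = 1)
      constructor
      · intro h; linarith
      · intro h; norm_num at h
  have vals3 : ∀ i : Fin 6, (0 < ((f i 0 : ↥S) : Fin 6 → EuclideanSpace ℝ (Fin 2)) 4 1)
      ↔ dataS4 i = 1 := by
    intro i
    fin_cases i
    · show (0 < BB ε 1 0) ↔ ((1:ℝ) = 1); constructor <;> intro h; rfl; linarith
    · show (0 < BB ε (-1) 0) ↔ ((-1:ℝ) = 1)
      constructor
      · intro h; linarith
      · intro h; norm_num at h
    · show (0 < BB ε 1 0) ↔ ((1:ℝ) = 1); constructor <;> intro h; rfl; linarith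
    · show (0 < BB ε (-1) 0) ↔ ((-1:ℝ) = 1)
      constructor
      · intro h; linarith
      · intro h; norm_num at h
    · show (0 < BB ε 1 0) ↔ ((1:ℝ) = 1); constructor <;> intro h; rfl; linarith
    · show (0 < BB ε (-1) 0) ↔ ((-1:ℝ) = 1)
      constructor
      · intro h; linarith
      · intro h; norm_num at h
  have Finj : Function.Injective F := by
    intro i j hij
    have E1 : dataK i = true ↔ dataK j = true :=
      ((vals1 i).symm.trans (Iff.intro (fun h => transfer hU1 hij h)
        (fun h => transfer hU1 hij.symm h))).trans (vals1 j)
    have E2 : dataS2 i = 1 ↔ dataS2 j = 1 :=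
      ((vals2 i).symm.trans (Iff.intro (fun h => transfer hU2 hij h)
        (fun h => transfer hU2 hij.symm h))).trans (vals2 j)
    have E3 : dataS4 i = 1 ↔ dataS4 j = 1 :=
      ((vals3 i).symm.trans (Iff.intro (fun h => transfer hU3 hij h)
        (fun h => transfer hU3 hij.symm h))).trans (vals3 j)
    fin_cases i <;> fin_cases j <;>
      first
        | rfl
        | (exfalso; revert E1 E2 E3; norm_num [dataK, dataS2, dataS4])
  have Fsurj : Function.Surjective F := by
    intro C
    obtain ⟨x, rfl⟩ := ConnectedComponents.surjective_coe C
    have hxS : x.val ∈ K33PinnedConfig ε 1 1 1 1 (Real.sqrt 2) 1 (Real.sqrt 2) 1 := x.2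
    obtain ⟨h3, h0, e5, e2, e25, e4, e45, hbr⟩ := (mem_iff hε hε1 x.val).1 hxS
    have hb2' := (sp x).2.1
    have hb4' := (sp x).2.2
    have key : ∀ (i : Fin 6) (t : ℝ),
        x.val = Phi ε (dataK i) (dataS2 i) (dataS4 i) t → F i = ConnectedComponents.mk x := by
      intro i t hxt
      have hfx : f i t = x := Subtype.ext hxt.symm
      rw [← hfx]
      exact (samecomp i t).symm
    rcases big_abs hb2' with hs2 | hs2 <;> rcases big_abs hb4' with hs4 | hs4 <;>
      rcases hbr with h1 | ⟨hx1, hy1, h42⟩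
    · obtain ⟨t, ht⟩ := matchPhi hε hε1 h3 h0 e5 e2 e25 e4 e45 true 1 1 (Or.inl rfl) (Or.inl rfl)
        (by rw [one_mul]; linarith) (by rw [one_mul]; linarith) (Or.inl ⟨rfl, h1⟩)
      exact ⟨0, key 0 t ht⟩
    · obtain ⟨t, ht⟩ := matchPhi hε hε1 h3 h0 e5 e2 e25 e4 e45 false 1 1 (Or.inl rfl) (Or.inl rfl)
        (by rw [one_mul]; linarith) (by rw [one_mul]; linarith) (Or.inr ⟨rfl, hx1, hy1⟩)
      exact ⟨4, key 4 t ht⟩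
    · obtain ⟨t, ht⟩ := matchPhi hε hε1 h3 h0 e5 e2 e25 e4 e45 true 1 (-1) (Or.inl rfl) (Or.inr rfl)
        (by rw [one_mul]; linarith) (by linarith) (Or.inl ⟨rfl, h1⟩)
      exact ⟨1, key 1 t ht⟩
    · exfalso
      have : x.val 4 1 = x.val 2 1 := by rw [h42]
      linarith
    · obtain ⟨t, ht⟩ := matchPhi hε hε1 h3 h0 e5 e2 e25 e4 e45 true (-1) 1 (Or.inr rfl) (Or.inl rfl)
        (by linarith) (by rw [one_mul]; linarith) (Or.inl ⟨rfl, h1⟩)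
      exact ⟨2, key 2 t ht⟩
    · exfalso
      have : x.val 4 1 = x.val 2 1 := by rw [h42]
      linarith
    · obtain ⟨t, ht⟩ := matchPhi hε hε1 h3 h0 e5 e2 e25 e4 e45 true (-1) (-1) (Or.inr rfl) (Or.inr rfl)
        (by linarith) (by linarith) (Or.inl ⟨rfl, h1⟩)
      exact ⟨3, key 3 t ht⟩
    · obtain ⟨t, ht⟩ := matchPhi hε hε1 h3 h0 e5 e2 e25 e4 e45 false (-1) (-1) (Or.inr rfl) (Or.inr rfl)
        (by linarith) (by linarith) (Or.inr ⟨rfl, hx1, hy1⟩)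
      exact ⟨5, key 5 t ht⟩
  have hcard := Nat.card_eq_of_bijective F ⟨Finj, Fsurj⟩
  rw [← hcard]
  simp
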